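/- A finite field extension L/K is a Galois extension if and only if the K-subalgebra of End_K(L) generated by L and Aut_K(L) equals all of End_K(L) (equivalently, L⋊Aut_K(L) = End_K(L)). -/

import Mathlib

open Module FiniteDimensional

/-- A finite field extension `L/K` is Galois if and only if the `K`-subalgebra of `End_K(L)`
generated by (the image of) `L` and `Aut_K(L)` is all of `End_K(L)`,
i.e. `L⋊Aut_K(L) = End_K(L)`. -/
theorem stmt12 (K L : Type) [Field K] [Field L] [Algebra K L] [FiniteDimensional K L] :
    IsGalois K L ↔
      Algebra.adjoin K (Set.range (Algebra.lmul K L) ∪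
        Set.range fun g : L ≃ₐ[K] L => (g.toLinearMap : Module.End K L)) = ⊤ := by
  classical
  set s : Set (Module.End K L) := Set.range (Algebra.lmul K L) ∪
        Set.range fun g : L ≃ₐ[K] L => (g.toLinearMap : Module.End K L) with hs
  constructor
  · intro hgal
    -- forward
    have li : LinearIndependent L (fun g : L ≃ₐ[K] L => (g.toLinearMap : Module.End K L)) := by
      have := (linearIndependent_algHom_toLinearMap K L L).comp
        (fun g : L ≃ₐ[K] L => g.toAlgHom) AlgEquiv.coe_algHom_injective
      exact this
    set p : Submodule L (Module.End K L) :=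
      Submodule.span L (Set.range fun g : L ≃ₐ[K] L => (g.toLinearMap : Module.End K L)) with hp
    have h1 : finrank L p = Fintype.card (L ≃ₐ[K] L) := finrank_span_eq_card li
    haveI : Module.Free L p := Module.Free.of_divisionRing L p
    have h2 : finrank K L * finrank L p = finrank K p := Module.finrank_mul_finrank K L p
    have hle : (Submodule.restrictScalars K p) ≤
        Subalgebra.toSubmodule (Algebra.adjoin K s) := by
      intro f hf
      simp only [Submodule.restrictScalars_mem] at hf
      refine Submodule.span_induction (p := fun f _ => f ∈ Algebra.adjoin K s) ?_ ?_ ?_ ?_ hf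
      · rintro x ⟨g, rfl⟩
        exact Algebra.subset_adjoin (Or.inr ⟨g, rfl⟩)
      · exact Subalgebra.zero_mem _
      · intro x y _ _ hx hy; exact Subalgebra.add_mem _ hx hy
      · intro a x _ hx
        have : a • x = (Algebra.lmul K L a) * x := by
          ext z; simp [Algebra.smul_def]
        rw [this]
        exact Subalgebra.mul_mem _ (Algebra.subset_adjoin (Or.inl ⟨a, rfl⟩)) hx
    have hcard : Fintype.card (L ≃ₐ[K] L) = finrank K L := by
      rw [← Nat.card_eq_fintype_card]; exact IsGalois.card_aut_eq_finrank K L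
    have hfr : finrank K (Subalgebra.toSubmodule (Algebra.adjoin K s)) = finrank K (Module.End K L) := by
      refine le_antisymm (Submodule.finrank_le _) ?_
      have h3 : finrank K (Submodule.restrictScalars K p) = finrank K L * finrank K L := by
        have : finrank K (Submodule.restrictScalars K p) = finrank K p := rfl
        rw [this, ← h2, h1, hcard]
      calc finrank K (Module.End K L) = finrank K L * finrank K L := by
            rw [Module.finrank_linearMap]
        _ = finrank K (Submodule.restrictScalars K p) := h3.symm
        _ ≤ finrank K (Subalgebra.toSubmodule (Algebra.adjoin K s)) :=
            Submodule.finrank_mono hle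
    have := Submodule.eq_top_of_finrank_eq hfr
    rwa [Algebra.toSubmodule_eq_top] at this
  · intro h
    -- reverse
    apply IsGalois.of_fixedField_eq_bot
    rw [eq_bot_iff]
    intro c hc
    rw [IntermediateField.mem_bot]
    by_contra hcK
    have hfix : ∀ g : L ≃ₐ[K] L, g c = c := fun g => hc ⟨g, Subgroup.mem_top g⟩
    -- c ∉ span K {1}
    set sp : Submodule K L := Submodule.span K {1} with hsp
    have hcsp : Submodule.Quotient.mk (p := sp) c ≠ 0 := by
      intro h0
      rw [Submodule.Quotient.mk_eq_zero] at h0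
      rw [Submodule.mem_span_singleton] at h0
      obtain ⟨k, hk⟩ := h0
      exact hcK ⟨k, by rw [Algebra.algebraMap_eq_smul_one]; exact hk⟩
    obtain ⟨ψ, hψ⟩ : ∃ ψ : Module.Dual K (L ⧸ sp), ψ (Submodule.Quotient.mk c) ≠ 0 := by
      by_contra hψ
      push_neg at hψ
      exact hcsp ((Module.forall_dual_apply_eq_zero_iff K _).1 hψ)
    set f : Module.End K L := (Algebra.linearMap K L) ∘ₗ ψ ∘ₗ sp.mkQ with hf
    -- f is in the centralizer of lmul c
    have hcent : Algebra.adjoin K s ≤ Subalgebra.centralizer K {(Algebra.lmul K L c : Module.End K L)} := by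
      rw [Algebra.adjoin_le_iff]
      rintro x (⟨a, rfl⟩ | ⟨g, rfl⟩)
      · rw [SetLike.mem_coe, Subalgebra.mem_centralizer_iff]
        rintro y (rfl : y = _)
        rw [← map_mul, ← map_mul, mul_comm]
      · rw [SetLike.mem_coe, Subalgebra.mem_centralizer_iff]
        rintro y (rfl : y = _)
        ext z
        simp only [Module.End.mul_apply, Algebra.coe_lmul_eq_mul, LinearMap.mul_apply',
          AlgEquiv.toLinearMap_apply]
        rw [map_mul, hfix g]
    have hfc : (Algebra.lmul K L c : Module.End K L) * f = f * (Algebra.lmul K L c) := by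
      have : f ∈ Subalgebra.centralizer K {(Algebra.lmul K L c : Module.End K L)} :=
        hcent (by rw [h]; trivial)
      rw [Subalgebra.mem_centralizer_iff] at this
      exact this _ rfl
    have h1 : f 1 = 0 := by
      simp only [hf, LinearMap.comp_apply, Submodule.mkQ_apply]
      have : Submodule.Quotient.mk (p := sp) 1 = 0 := by
        rw [Submodule.Quotient.mk_eq_zero]; exact Submodule.mem_span_singleton_self 1
      rw [this, map_zero, map_zero]
    have := congrArg (fun φ : Module.End K L => φ 1) hfc
    simp only [Module.End.mul_apply, Algebra.coe_lmul_eq_mul, LinearMap.mul_apply',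
      mul_one, h1, mul_zero] at this
    apply hψ
    have hfc0 : f c = 0 := this.symm
    simp only [hf, LinearMap.comp_apply, Submodule.mkQ_apply, Algebra.linearMap_apply] at hfc0
    exact (algebraMap K L).injective (by rw [hfc0, map_zero])
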